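/- Let (L, R) be a cartesian factorization system with enough L-injectives on a category C, let C_R be the full subcategory of L-injective objects, and let R̂ : C ⥤ C_R be a left adjoint of the inclusion C_R ↪ C (injective replacement). Then a morphism f : X ⟶ Y of C lies in the class L if and only if R̂(f) is an isomorphism. -/

import Mathlib

open CategoryTheory Limits

universe v u v' u'

/-- An orthogonal factorization system `(L, R)` on a category `C`. -/
structure IsOFS {C : Type u} [Category.{v} C] (L R : MorphismProperty C) : Prop where
  iso_left : ∀ {X Y : C} (f : X ⟶ Y), IsIso f → L f
  iso_right : ∀ {X Y : C} (f : X ⟶ Y), IsIso f → R f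
  comp_left : ∀ {X Y Z : C} (f : X ⟶ Y) (g : Y ⟶ Z), L f → L g → L (f ≫ g)
  comp_right : ∀ {X Y Z : C} (f : X ⟶ Y) (g : Y ⟶ Z), R f → R g → R (f ≫ g)
  factor : ∀ {X Y : C} (f : X ⟶ Y), ∃ (Z : C) (e : X ⟶ Z) (m : Z ⟶ Y), L e ∧ R m ∧ e ≫ m = f
  lift : ∀ {A B X Y : C} (e : A ⟶ B) (m : X ⟶ Y) (u : A ⟶ X) (v : B ⟶ Y),
    L e → R m → u ≫ m = e ≫ v → ∃! d : B ⟶ X, e ≫ d = u ∧ d ≫ m = v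

/-- A right stable orthogonal factorization system: pullbacks of morphisms in `L`
along morphisms in `R` exist and lie in `L`. -/
structure IsRightStableOFS {C : Type u} [Category.{v} C] (L R : MorphismProperty C)
    extends IsOFS L R : Prop where
  right_stable : ∀ {A B D : C} (g : B ⟶ D) (m : A ⟶ D), L g → R m →
    ∃ (P : C) (pfst : P ⟶ A) (psnd : P ⟶ B), L pfst ∧ IsPullback pfst psnd m g

/-- A cartesian factorization system: an OFS where `L` satisfies two-out-of-three and
pullbacks of morphisms in `L` along morphisms in `R` exist and lie in `L`. -/
structure IsCartesianFS {C : Type u} [Category.{v} C] (L R : MorphismProperty C)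
    extends IsOFS L R : Prop where
  left_two_of_three : ∀ {X Y Z : C} (f : X ⟶ Y) (g : Y ⟶ Z), L g → L (f ≫ g) → L f
  right_stable : ∀ {A B D : C} (g : B ⟶ D) (m : A ⟶ D), L g → R m →
    ∃ (P : C) (pfst : P ⟶ A) (psnd : P ⟶ B), L pfst ∧ IsPullback pfst psnd m g

/-- An object `X` is `L`-injective if every extension problem along a morphism of `L`
has a unique solution. -/
def LInjective {C : Type u} [Category.{v} C] (L : MorphismProperty C) (X : C) : Prop :=
  ∀ {A B : C} (e : A ⟶ B), L e → ∀ g : A ⟶ X, ∃! h : B ⟶ X, e ≫ h = g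

/-- A morphism of `E` is `p`-vertical if its image under `p` is an isomorphism. -/
def Vert {E : Type u} {B : Type u'} [Category.{v} E] [Category.{v'} B] (p : E ⥤ B) :
    MorphismProperty E :=
  fun _ _ e => IsIso (p.map e)

/-- A morphism of `E` is `p`-cartesian (strongly cartesian). -/
def PCart {E : Type u} {B : Type u'} [Category.{v} E] [Category.{v'} B] (p : E ⥤ B) :
    MorphismProperty E :=
  fun Z Y m => ∀ ⦃W : E⦄ (h : W ⟶ Y) (g : p.obj W ⟶ p.obj Z),
    g ≫ p.map m = p.map h → ∃! k : W ⟶ Z, p.map k = g ∧ k ≫ m = h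

/-- `p` is a Grothendieck fibration: every morphism of `B` into the image of an object
of `E` has a `p`-cartesian lift. -/
def IsGrothFib {E : Type u} {B : Type u'} [Category.{v} E] [Category.{v'} B] (p : E ⥤ B) :
    Prop :=
  ∀ (Y : E) (b : B) (f : b ⟶ p.obj Y),
    ∃ (Z : E) (m : Z ⟶ Y) (hZ : p.obj Z = b), PCart p m ∧ p.map m = eqToHom hZ ≫ f

/-- For a cartesian factorization system with enough `L`-injectives and injective replacement
left adjoint `Rhat`, a morphism lies in `L` iff its injective replacement is an
isomorphism. -/
theorem stmt8 {C : Type u} [Category.{v} C] {L R : MorphismProperty C}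
    (hLR : IsCartesianFS L R)
    (henough : ∀ X : C, ∃ (Y : C) (e : X ⟶ Y), L e ∧ LInjective L Y)
    (Rhat : C ⥤ ObjectProperty.FullSubcategory (LInjective L))
    (adj : Rhat ⊣ ObjectProperty.ι (LInjective L))
    {X Y : C} (f : X ⟶ Y) :
    L f ↔ IsIso (Rhat.map f) := by
  let ι := ObjectProperty.ι (LInjective L)
  -- The unit of the adjunction lies in `L` at every object.
  have hunit : ∀ Z : C, L (adj.unit.app Z) := by
    intro Z
    obtain ⟨W, e, he, hW⟩ := henough Z
    let g : Rhat.obj Z ⟶ ⟨W, hW⟩ := (adj.homEquiv Z ⟨W, hW⟩).symm e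
    have hg : adj.unit.app Z ≫ ι.map g = e := by
      have := (adj.homEquiv Z ⟨W, hW⟩).apply_symm_apply e
      rwa [Adjunction.homEquiv_unit] at this
    obtain ⟨h, hh, _⟩ := (Rhat.obj Z).property e he (adj.unit.app Z)
    -- h ≫ ι.map g = 𝟙 W
    have h1 : h ≫ ι.map g = 𝟙 W := by
      obtain ⟨u, hu, huniq⟩ := hW e he e
      have e1 : e ≫ (h ≫ ι.map g) = e := by rw [← Category.assoc, hh, hg]
      have e2 : e ≫ 𝟙 W = e := Category.comp_id e
      rw [huniq _ e1, huniq _ e2]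
    -- ι.map g ≫ h = 𝟙
    let h' : (⟨W, hW⟩ : ObjectProperty.FullSubcategory (LInjective L)) ⟶ Rhat.obj Z :=
      ObjectProperty.homMk h
    have h2' : g ≫ h' = 𝟙 (Rhat.obj Z) := by
      apply (adj.homEquiv Z (Rhat.obj Z)).injective
      simp only [Adjunction.homEquiv_unit, CategoryTheory.Functor.map_comp,
        CategoryTheory.Functor.map_id, ← Category.assoc, hg]
      exact (congrArg (· ≫ ι.map h') hg).trans (hh.trans (Category.comp_id (adj.unit.app Z)).symm)
    have h2 : ι.map g ≫ h = 𝟙 ((Rhat.obj Z).obj) := by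
      have := congrArg ι.map h2'
      rw [CategoryTheory.Functor.map_comp, CategoryTheory.Functor.map_id] at this
      exact this
    have : IsIso h := ⟨ι.map g, h1, h2⟩
    rw [← hh]
    exact hLR.comp_left e h he (hLR.iso_left h this)
  have nat : f ≫ adj.unit.app Y = adj.unit.app X ≫ ι.map (Rhat.map f) :=
    adj.unit.naturality f
  constructor
  · intro hf
    have hcomp : L (f ≫ adj.unit.app Y) := hLR.comp_left _ _ hf (hunit Y)
    obtain ⟨k, hk, _⟩ := (Rhat.obj X).property (f ≫ adj.unit.app Y) hcomp (adj.unit.app X)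
    have h1 : ι.map (Rhat.map f) ≫ k = 𝟙 _ := by
      obtain ⟨u, hu, huniq⟩ := (Rhat.obj X).property (adj.unit.app X) (hunit X) (adj.unit.app X)
      have e1 : adj.unit.app X ≫ (ι.map (Rhat.map f) ≫ k) = adj.unit.app X := by
        rw [← Category.assoc, ← nat]
        exact hk
      have e2 : adj.unit.app X ≫ 𝟙 ((Rhat.obj X).obj) = adj.unit.app X := Category.comp_id _
      exact (huniq _ e1).trans (huniq _ e2).symm
    have h2 : k ≫ ι.map (Rhat.map f) = 𝟙 _ := by
      obtain ⟨u, hu, huniq⟩ := (Rhat.obj Y).property (f ≫ adj.unit.app Y) hcomp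
        (f ≫ adj.unit.app Y)
      have e1 : (f ≫ adj.unit.app Y) ≫ (k ≫ ι.map (Rhat.map f)) = f ≫ adj.unit.app Y := by
        rw [← Category.assoc, hk, nat]
      have e2 : (f ≫ adj.unit.app Y) ≫ 𝟙 ((Rhat.obj Y).obj) = f ≫ adj.unit.app Y :=
        Category.comp_id _
      exact (huniq _ e1).trans (huniq _ e2).symm
    have : IsIso (ι.map (Rhat.map f)) := ⟨k, h1, h2⟩
    exact isIso_of_reflects_iso (Rhat.map f) ι
  · intro hiso
    have : IsIso (ι.map (Rhat.map f)) := inferInstance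
    have hL : L (adj.unit.app X ≫ ι.map (Rhat.map f)) :=
      hLR.comp_left _ _ (hunit X) (hLR.iso_left _ this)
    rw [← nat] at hL
    exact hLR.left_two_of_three f (adj.unit.app Y) (hunit Y) hL
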